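/- For integers n ≥ 0 and any odd half-integer family: if μ_1,…,μ_{n+1} are rationals with 2μ_1 ∈ ℕ, μ_{i+1} - μ_i ∈ ℕ for all i, and 2μ_{n+1} odd, then the dimension of the irreducible o(2n+3)-module with highest weight ∑μ_iε_i equals 2·∑_{s=0}^{n} (-1)^{n-s}·C(n+s+1/2+μ_{s+1}, 2n+1)·d_{2n+1}(∑_{i=1}^s μ_iε_i + ∑_{i=s+1}^n (μ_{i+1}+1)ε_i), where d_{2n+1}(ν) is the Weyl dimension of the irreducible o(2n+1)-module with highest weight ν. -/

import Mathlib

/-- Binomial coefficient `C(x, m)` with the convention that it vanishes when `x < m`,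
and otherwise equals the generalized binomial coefficient `x(x-1)⋯(x-m+1)/m!`. -/
noncomputable def cchoose (x : ℚ) (m : ℕ) : ℚ :=
  if x < m then 0 else (∏ i ∈ Finset.range m, (x - i)) / (Nat.factorial m)

/-- Weyl dimension product for the root system `B_n` with positive roots
`{ε_i, ε_j ± ε_i}` and `ρ = (1/2)∑(2i-1)ε_i`, evaluated at the weight `∑ ν_i ε_i`:
`∏_{α∈Φ⁺}(ν+ρ,α)/(ρ,α)`. -/
noncomputable def dimB (n : ℕ) (ν : ℕ → ℚ) : ℚ :=
  (∏ p ∈ (Finset.Icc 1 n ×ˢ Finset.Icc 1 n).filter (fun p => p.1 < p.2),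
      (((ν p.2 + (p.2 : ℚ) - 1/2) - (ν p.1 + (p.1 : ℚ) - 1/2)) *
        ((ν p.2 + (p.2 : ℚ) - 1/2) + (ν p.1 + (p.1 : ℚ) - 1/2))) /
      ((((p.2 : ℚ) - 1/2) - ((p.1 : ℚ) - 1/2)) *
        (((p.2 : ℚ) - 1/2) + ((p.1 : ℚ) - 1/2)))) *
  ∏ i ∈ Finset.Icc 1 n, (ν i + (i : ℚ) - 1/2) / ((i : ℚ) - 1/2)

/-- Weyl dimension product for the root system `D_n` with positive roots
`{ε_j ± ε_i : i < j}` and `ρ = ∑(i-1)ε_i`, evaluated at the weight `∑ ν_i ε_i`. -/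
noncomputable def dimD (n : ℕ) (ν : ℕ → ℚ) : ℚ :=
  ∏ p ∈ (Finset.Icc 1 n ×ˢ Finset.Icc 1 n).filter (fun p => p.1 < p.2),
      (((ν p.2 + (p.2 : ℚ) - 1) - (ν p.1 + (p.1 : ℚ) - 1)) *
        ((ν p.2 + (p.2 : ℚ) - 1) + (ν p.1 + (p.1 : ℚ) - 1))) /
      ((((p.2 : ℚ)) - (p.1 : ℚ)) * (((p.2 : ℚ) - 1) + ((p.1 : ℚ) - 1)))

namespace MacdonaldB

open Finset

/-- Fin-indexed "odd Vandermonde" product. -/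
noncomputable def FoddQ (m : ℕ) (x : Fin m → ℚ) : ℚ :=
  (∏ i, x i) * ∏ i : Fin m, ∏ j ∈ Finset.Ioi i, (x j ^ 2 - x i ^ 2)

/-- ℕ-indexed version of `FoddQ`. -/
noncomputable def Godd (m : ℕ) (z : ℕ → ℚ) : ℚ :=
  (∏ i ∈ range m, z i) * ∏ i ∈ range m, ∏ j ∈ Ico (i+1) m, (z j ^ 2 - z i ^ 2)

lemma det_oddVandermonde (m : ℕ) (x : Fin m → ℚ) :
    (Matrix.of fun i j : Fin m => x i * (x i ^ 2) ^ (j : ℕ)).det = FoddQ m x := by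
  have h := Matrix.det_mul_column x (Matrix.vandermonde (fun i => x i ^ 2))
  rw [FoddQ, ← Matrix.det_vandermonde (fun i => x i ^ 2), ← h]
  congr 1

/-- Laplace expansion of the odd Vandermonde determinant with last column modified by a
monic polynomial of degree `n`. -/
lemma master (n : ℕ) (x : Fin (n+1) → ℚ) (Q : Polynomial ℚ) (hQ : Q.Monic)
    (hdeg : Q.natDegree = n) :
    ∑ s : Fin (n+1), (-1:ℚ) ^ ((s:ℕ) + n) * (x s * Q.eval (x s ^ 2)) *
        FoddQ n (fun i => x (s.succAbove i))
      = FoddQ (n+1) x := by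
  set V : Matrix (Fin (n+1)) (Fin (n+1)) ℚ :=
    Matrix.of (fun i j => x i * (x i ^ 2) ^ (j : ℕ)) with hV
  have hcol : (fun k => x k * Q.eval (x k ^ 2))
      = fun k => ∑ i : Fin (n+1), (Q.coeff i) • V k i := by
    funext k
    rw [Polynomial.eval_eq_sum_range' (lt_of_le_of_lt hdeg.le (Nat.lt_succ_self n)),
      Finset.mul_sum, ← Fin.sum_univ_eq_sum_range]
    refine Finset.sum_congr rfl fun i _ => ?_
    simp [hV, Matrix.of_apply]
    ring
  have hB : (V.updateCol (Fin.last n) (fun k => x k * Q.eval (x k ^ 2))).det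
      = FoddQ (n+1) x := by
    rw [hcol, Matrix.det_updateCol_sum]
    have hlast : Q.coeff ((Fin.last n : Fin (n+1)) : ℕ) = 1 := by
      have := hQ.coeff_natDegree
      simpa [hdeg] using this
    rw [hlast, one_smul, det_oddVandermonde]
  rw [← hB, Matrix.det_succ_column _ (Fin.last n)]
  refine Finset.sum_congr rfl fun s _ => ?_
  have h1 : (V.updateCol (Fin.last n) (fun k => x k * Q.eval (x k ^ 2))) s (Fin.last n)
      = x s * Q.eval (x s ^ 2) := by
    rw [Matrix.updateCol_self]
  have h2 : ((V.updateCol (Fin.last n) (fun k => x k * Q.eval (x k ^ 2))).submatrix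
        s.succAbove (Fin.last n).succAbove)
      = Matrix.of (fun i j : Fin n => x (s.succAbove i) * ((x (s.succAbove i)) ^ 2) ^ (j : ℕ)) := by
    ext a b
    rw [Matrix.submatrix_apply, Fin.succAbove_last]
    rw [Matrix.updateCol_ne (Fin.castSucc_lt_last b).ne]
    rfl
  rw [h1, h2, det_oddVandermonde]
  simp [Fin.val_last]

lemma Fodd_eq_Godd (m : ℕ) (z : ℕ → ℚ) : FoddQ m (fun i => z i) = Godd m z := by
  unfold FoddQ Godd
  congr 1
  · rw [← Fin.prod_univ_eq_prod_range]
  · rw [← Fin.prod_univ_eq_prod_range (fun i => ∏ j ∈ Ico (i+1) m, (z j ^ 2 - z i ^ 2))]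
    refine Finset.prod_congr rfl fun i _ => ?_
    have hmap : ∏ j ∈ Finset.Ioi i, (z j ^ 2 - z (i:ℕ) ^ 2)
        = ∏ j ∈ (Finset.Ioi i).map Fin.valEmbedding, (z j ^ 2 - z (i:ℕ) ^ 2) := by
      rw [Finset.prod_map]
      rfl
    rw [hmap, Fin.map_valEmbedding_Ioi]
    apply Finset.prod_congr _ fun _ _ => rfl
    ext t
    simp only [mem_Ioo, mem_Ico]
    have := i.isLt
    omega

lemma Godd_succ (m : ℕ) (z : ℕ → ℚ) :
    Godd (m+1) z = Godd m z * (z m * ∏ i ∈ range m, (z m ^ 2 - z i ^ 2)) := by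
  unfold Godd
  rw [prod_range_succ, prod_range_succ (f := fun i => ∏ j ∈ Ico (i+1) (m+1), (z j ^ 2 - z i ^ 2))]
  have hempty : ∏ j ∈ Ico (m+1) (m+1), (z j ^ 2 - z m ^ 2) = 1 := by simp
  rw [hempty, mul_one]
  have hsplit : ∏ i ∈ range m, ∏ j ∈ Ico (i+1) (m+1), (z j ^ 2 - z i ^ 2)
      = ∏ i ∈ range m, ((∏ j ∈ Ico (i+1) m, (z j ^ 2 - z i ^ 2)) * (z m ^ 2 - z i ^ 2)) := by
    refine Finset.prod_congr rfl fun i hi => ?_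
    rw [Finset.prod_Ico_succ_top (Nat.succ_le_of_lt (mem_range.mp hi))]
  rw [hsplit, Finset.prod_mul_distrib]
  ring

lemma prod_Icc_one (m : ℕ) (f : ℕ → ℚ) : ∏ i ∈ Icc 1 m, f i = ∏ i ∈ range m, f (i+1) := by
  rw [← Finset.Ico_add_one_right_eq_Icc, Finset.prod_Ico_eq_prod_range]
  simp [add_comm]

lemma prod_pairs (m : ℕ) (f : ℕ → ℕ → ℚ) :
    ∏ p ∈ (Finset.Icc 1 m ×ˢ Finset.Icc 1 m).filter (fun p => p.1 < p.2), f p.1 p.2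
      = ∏ i ∈ range m, ∏ j ∈ Ico (i+1) m, f (i+1) (j+1) := by
  rw [Finset.prod_sigma' (range m) (fun i => Ico (i+1) m) (fun i j => f (i+1) (j+1))]
  refine Finset.prod_nbij' (fun p => ⟨p.1 - 1, p.2 - 1⟩) (fun q => (q.1 + 1, q.2 + 1))
    ?_ ?_ ?_ ?_ ?_
  · intro p hp
    simp only [mem_filter, mem_product, mem_Icc] at hp
    simp only [mem_sigma, mem_range, mem_Ico]
    omega
  · intro q hq
    simp only [mem_sigma, mem_range, mem_Ico] at hq
    simp only [mem_filter, mem_product, mem_Icc]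
    omega
  · intro p hp
    simp only [mem_filter, mem_product, mem_Icc] at hp
    ext <;> simp <;> omega
  · intro q hq
    simp only [mem_sigma, mem_range, mem_Ico] at hq
    simp
  · intro p hp
    simp only [mem_filter, mem_product, mem_Icc] at hp
    have h1 : p.1 - 1 + 1 = p.1 := by omega
    have h2 : p.2 - 1 + 1 = p.2 := by omega
    simp only [h1, h2]

lemma dimB_eq (m : ℕ) (ν : ℕ → ℚ) :
    dimB m ν = Godd m (fun i => ν (i+1) + (i : ℚ) + 1/2) / Godd m (fun i => (i : ℚ) + 1/2) := by
  unfold dimB Godd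
  rw [prod_pairs m (fun a b =>
      ((ν b + (b : ℚ) - 1/2) - (ν a + (a : ℚ) - 1/2)) *
        ((ν b + (b : ℚ) - 1/2) + (ν a + (a : ℚ) - 1/2)) /
      ((((b : ℚ) - 1/2) - ((a : ℚ) - 1/2)) * (((b : ℚ) - 1/2) + ((a : ℚ) - 1/2)))),
    prod_Icc_one m (fun i => (ν i + (i : ℚ) - 1/2) / ((i : ℚ) - 1/2))]
  have e1 : ∀ (w : ℕ → ℚ), (∏ i ∈ range m, ∏ j ∈ Ico (i+1) m,
        ((w j - w i) * (w j + w i)))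
      = ∏ i ∈ range m, ∏ j ∈ Ico (i+1) m, (w j ^ 2 - w i ^ 2) := by
    intro w
    exact Finset.prod_congr rfl fun i _ => Finset.prod_congr rfl fun j _ => by ring
  have key : ∀ i j : ℕ,
      ((ν (j+1) + ((j+1 : ℕ) : ℚ) - 1/2) - (ν (i+1) + ((i+1 : ℕ) : ℚ) - 1/2)) *
        ((ν (j+1) + ((j+1 : ℕ) : ℚ) - 1/2) + (ν (i+1) + ((i+1 : ℕ) : ℚ) - 1/2)) /
      (((((j+1 : ℕ) : ℚ)) - 1/2 - (((i+1 : ℕ) : ℚ) - 1/2)) *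
        ((((j+1 : ℕ) : ℚ) - 1/2) + (((i+1 : ℕ) : ℚ) - 1/2)))
      = (((ν (j+1) + (j : ℚ) + 1/2) - (ν (i+1) + (i : ℚ) + 1/2)) *
          ((ν (j+1) + (j : ℚ) + 1/2) + (ν (i+1) + (i : ℚ) + 1/2))) /
        ((((j : ℚ) + 1/2) - ((i : ℚ) + 1/2)) * (((j : ℚ) + 1/2) + ((i : ℚ) + 1/2))) := by
    intro i j
    push_cast
    ring_nf
  calc (∏ i ∈ range m, ∏ j ∈ Ico (i+1) m,
        ((ν (j+1) + ((j+1 : ℕ) : ℚ) - 1/2) - (ν (i+1) + ((i+1 : ℕ) : ℚ) - 1/2)) *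
        ((ν (j+1) + ((j+1 : ℕ) : ℚ) - 1/2) + (ν (i+1) + ((i+1 : ℕ) : ℚ) - 1/2)) /
      (((((j+1 : ℕ) : ℚ)) - 1/2 - (((i+1 : ℕ) : ℚ) - 1/2)) *
        ((((j+1 : ℕ) : ℚ) - 1/2) + (((i+1 : ℕ) : ℚ) - 1/2)))) *
      ∏ i ∈ range m, (ν (i+1) + ((i+1 : ℕ) : ℚ) - 1/2) / (((i+1 : ℕ) : ℚ) - 1/2)
      = (∏ i ∈ range m, ∏ j ∈ Ico (i+1) m,
        (((ν (j+1) + (j : ℚ) + 1/2) - (ν (i+1) + (i : ℚ) + 1/2)) *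
          ((ν (j+1) + (j : ℚ) + 1/2) + (ν (i+1) + (i : ℚ) + 1/2))) /
        ((((j : ℚ) + 1/2) - ((i : ℚ) + 1/2)) * (((j : ℚ) + 1/2) + ((i : ℚ) + 1/2)))) *
      ∏ i ∈ range m, (ν (i+1) + (i : ℚ) + 1/2) / ((i : ℚ) + 1/2) := by
        congr 1
        · exact Finset.prod_congr rfl fun i _ => Finset.prod_congr rfl fun j _ => key i j
        · refine Finset.prod_congr rfl fun i _ => ?_
          push_cast
          ring_nf
    _ = Godd m (fun i => ν (i+1) + (i : ℚ) + 1/2) / Godd m (fun i => (i : ℚ) + 1/2) := by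
        unfold Godd
        rw [Finset.prod_div_distrib]
        have h : ∀ (u v : ℕ → ℕ → ℚ), ∏ i ∈ range m, ∏ j ∈ Ico (i+1) m, (u i j / v i j)
            = (∏ i ∈ range m, ∏ j ∈ Ico (i+1) m, u i j)
              / ∏ i ∈ range m, ∏ j ∈ Ico (i+1) m, v i j := by
          intro u v
          rw [← Finset.prod_div_distrib]
          exact Finset.prod_congr rfl fun i _ => Finset.prod_div_distrib ..
        rw [h, e1, e1, div_mul_div_comm]
        ring

lemma RQ_pos (m : ℕ) : 0 < Godd m (fun i => (i : ℚ) + 1/2) := by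
  unfold Godd
  apply mul_pos
  · apply Finset.prod_pos
    intro i _
    positivity
  · apply Finset.prod_pos
    intro i _
    apply Finset.prod_pos
    intro j hj
    have hij : (i : ℚ) + 1/2 < (j : ℚ) + 1/2 := by
      have h1 := (mem_Ico.mp hj).1
      have : (i : ℚ) < j := by exact_mod_cast Nat.lt_of_succ_le h1
      linarith
    have h0 : (0:ℚ) ≤ (i : ℚ) + 1/2 := by positivity
    have := pow_lt_pow_left₀ hij h0 (n := 2) (by norm_num)
    linarith

lemma prod_desc (m : ℕ) : ∏ i ∈ range m, ((m : ℚ) - i) = Nat.factorial m := by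
  have h : ∏ i ∈ range m, ((m : ℚ) - i) = ∏ i ∈ range m, (((m - i : ℕ)) : ℚ) := by
    refine Finset.prod_congr rfl fun i hi => ?_
    have := mem_range.mp hi
    push_cast [Nat.cast_sub this.le]
    ring
  rw [h, ← Nat.cast_prod]
  congr 1
  calc ∏ i ∈ range m, (m - i) = ∏ i ∈ range m, ((fun j => j + 1) (m - 1 - i)) := by
        refine Finset.prod_congr rfl fun i hi => ?_
        have := mem_range.mp hi
        show m - i = m - 1 - i + 1
        omega
    _ = ∏ i ∈ range m, (i + 1) := Finset.prod_range_reflect (fun j => j + 1) m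
    _ = Nat.factorial m := Finset.prod_range_add_one_eq_factorial m

lemma prod_asc (m : ℕ) : (∏ i ∈ range m, ((m : ℚ) + i + 1)) * Nat.factorial m
    = Nat.factorial (2*m) := by
  have hnat : Nat.factorial m * ∏ i ∈ range m, (m + i + 1) = Nat.factorial (2*m) := by
    have := Finset.prod_range_add (fun j => j + 1) m m
    rw [← Finset.prod_range_add_one_eq_factorial, ← Finset.prod_range_add_one_eq_factorial,
      two_mul, this]
  calc (∏ i ∈ range m, ((m : ℚ) + i + 1)) * Nat.factorial m
      = (((Nat.factorial m * ∏ i ∈ range m, (m + i + 1) : ℕ)) : ℚ) := by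
        push_cast
        ring
    _ = Nat.factorial (2*m) := by rw [hnat]

lemma RQ_succ (m : ℕ) : Godd (m+1) (fun i => (i : ℚ) + 1/2) * 2
    = Godd m (fun i => (i : ℚ) + 1/2) * Nat.factorial (2*m+1) := by
  rw [Godd_succ]
  have h1 : ∏ i ∈ range m, (((m : ℚ) + 1/2) ^ 2 - ((i : ℚ) + 1/2) ^ 2)
      = ∏ i ∈ range m, (((m : ℚ) - i) * ((m : ℚ) + i + 1)) := by
    refine Finset.prod_congr rfl fun i _ => by ring
  rw [h1, Finset.prod_mul_distrib, prod_desc]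
  have h2 := prod_asc m
  have hfact : (Nat.factorial (2*m+1) : ℚ) = (2*m+1) * Nat.factorial (2*m) := by
    rw [Nat.factorial_succ]
    push_cast
    ring
  rw [hfact, ← h2]
  ring

lemma prodA (n : ℕ) (l : ℚ) :
    ∏ i ∈ range (2*n+1), ((n : ℚ) + l - i) = l * ∏ j ∈ range n, (l^2 - ((j : ℚ)+1)^2) := by
  induction n with
  | zero => simp
  | succ n ih =>
    have hr : 2*(n+1)+1 = (2*n+2)+1 := by ring
    rw [hr, Finset.prod_range_succ, Finset.prod_range_succ']
    have hmid : ∏ i ∈ range (2*n+1), (((n+1 : ℕ) : ℚ) + l - ((i+1 : ℕ) : ℚ))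
        = ∏ i ∈ range (2*n+1), ((n : ℚ) + l - i) := by
      refine Finset.prod_congr rfl fun i _ => by push_cast; ring
    rw [hmid, ih, Finset.prod_range_succ]
    push_cast
    ring

lemma cchoose_eq (n m : ℕ) (l : ℚ) (hm : l = (m : ℚ) + 1) :
    cchoose ((n : ℚ) + l) (2*n+1)
      = l * (∏ j ∈ range n, (l^2 - ((j : ℚ)+1)^2)) / Nat.factorial (2*n+1) := by
  unfold cchoose
  split_ifs with h
  · have hmn : m < n := by
      have hc : ((2*n+1 : ℕ) : ℚ) = 2*(n:ℚ)+1 := by push_cast; ring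
      rw [hc, hm] at h
      exact_mod_cast (by linarith : (m:ℚ) < (n:ℚ))
    have hz : l^2 - ((m:ℚ)+1)^2 = 0 := by rw [hm]; ring
    rw [Finset.prod_eq_zero (mem_range.mpr hmn) hz]
    simp
  · rw [prodA]

lemma val_succAbove' {n : ℕ} (p : Fin (n+1)) (i : Fin n) :
    ((p.succAbove i : Fin (n+1)) : ℕ) = if (i : ℕ) < (p : ℕ) then (i : ℕ) else (i : ℕ) + 1 := by
  by_cases h : Fin.castSucc i < p
  · rw [Fin.succAbove_of_castSucc_lt _ _ h]
    simp only [Fin.coe_castSucc]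
    rw [if_pos]
    exact h
  · rw [Fin.succAbove_of_le_castSucc _ _ (not_lt.mp h)]
    simp only [Fin.val_succ]
    rw [if_neg]
    exact not_lt.mpr (not_lt.mp h)

end MacdonaldB

open Finset MacdonaldB in
/-- For a dominant integral weight `λ = ∑ μ_i ε_i` of `o(2n+3)` with `2μ_{n+1}` odd,
`d_{2n+3}(λ) = 2∑_{s=0}^{n}(-1)^{n-s} C(n+s+1/2+μ_{s+1}, 2n+1)
  d_{2n+1}(∑_{i≤s} μ_i ε_i + ∑_{i>s}(μ_{i+1}+1) ε_i)`,
where the dimensions are Weyl dimension products of types `B_{n+1}` and `B_n`. -/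
theorem macdonald_analogue_B_odd (n : ℕ) (μ : ℕ → ℚ)
    (h1 : ∃ a : ℕ, 2 * μ 1 = a)
    (hdom : ∀ i : ℕ, 1 ≤ i → i ≤ n → ∃ m : ℕ, μ (i + 1) - μ i = m)
    (hodd : ∃ m : ℕ, 2 * μ (n + 1) = 2 * m + 1) :
    dimB (n + 1) μ =
      2 * ∑ s ∈ Finset.range (n + 1), (-1 : ℚ) ^ (n - s) *
        cchoose ((n : ℚ) + (s : ℚ) + 1/2 + μ (s + 1)) (2 * n + 1) *
        dimB n (fun i => if i ≤ s then μ i else μ (i + 1) + 1) := by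
  classical
  obtain ⟨a, ha⟩ := h1
  obtain ⟨mo, hmo⟩ := hodd
  -- integrality of the shifted coordinates
  have key : ∀ s : ℕ, s ≤ n → ∃ K : ℕ, 2 * μ (s+1) = (a : ℚ) + 2*K := by
    intro s
    induction s with
    | zero => exact fun _ => ⟨0, by rw [ha]; push_cast; ring⟩
    | succ t ih =>
      intro hs
      obtain ⟨K, hK⟩ := ih (by omega)
      obtain ⟨d, hd⟩ := hdom (t+1) (by omega) (by omega)
      refine ⟨K + d, ?_⟩
      push_cast
      linarith
  obtain ⟨Kn, hKn⟩ := key n le_rfl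
  have haodd : (a : ℚ) = 2*(mo - Kn : ℕ) + 1 ∧ Kn ≤ mo := by
    have hcast : ((a + 2*Kn : ℕ) : ℚ) = ((2*mo + 1 : ℕ) : ℚ) := by push_cast; linarith
    have hnat : a + 2*Kn = 2*mo + 1 := Nat.cast_injective hcast
    constructor
    · have h' : a = 2*(mo - Kn) + 1 := by omega
      rw [h']
      push_cast
      ring
    · omega
  have half : ∀ s : ℕ, s ≤ n → ∃ m : ℕ, μ (s+1) + (s : ℚ) + 1/2 = (m : ℚ) + 1 := by
    intro s hs
    obtain ⟨K, hK⟩ := key s hs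
    refine ⟨(mo - Kn) + K + s, ?_⟩
    have h1 := haodd.1
    push_cast
    linarith
  -- the auxiliary polynomial
  set Q : Polynomial ℚ := ∏ j ∈ range n, (Polynomial.X - Polynomial.C (((j:ℚ)+1)^2)) with hQdef
  have hQmonic : Q.Monic :=
    Polynomial.monic_prod_of_monic _ _ (fun j _ => Polynomial.monic_X_sub_C _)
  have hQdeg : Q.natDegree = n := by
    rw [hQdef, Polynomial.natDegree_prod _ _ (fun j _ => Polynomial.X_sub_C_ne_zero _)]
    have h' : ∀ j ∈ range n, (Polynomial.X - Polynomial.C (((j:ℚ)+1)^2)).natDegree = 1 :=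
      fun j _ => Polynomial.natDegree_X_sub_C _
    rw [Finset.sum_congr rfl h', Finset.sum_const, card_range, smul_eq_mul, mul_one]
  have hQeval : ∀ t : ℚ, Q.eval t = ∏ j ∈ range n, (t - ((j:ℚ)+1)^2) := by
    intro t
    rw [hQdef, Polynomial.eval_prod]
    simp
  -- rewrite each summand
  have hrw : ∀ s ∈ range (n+1),
      (-1 : ℚ) ^ (n - s) *
        cchoose ((n : ℚ) + (s : ℚ) + 1/2 + μ (s + 1)) (2 * n + 1) *
        dimB n (fun i => if i ≤ s then μ i else μ (i + 1) + 1)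
      = ((-1:ℚ)^(s+n) * ((μ (s+1) + (s:ℚ) + 1/2) * Q.eval ((μ (s+1) + (s:ℚ) + 1/2)^2)) *
          Godd n (fun i => (if i+1 ≤ s then μ (i+1) else μ (i+1+1)+1) + (i:ℚ) + 1/2))
        * (1 / ((Nat.factorial (2*n+1) : ℚ) * Godd n (fun i => (i : ℚ) + 1/2))) := by
    intro s hs
    have hs' : s ≤ n := by
      have := mem_range.mp hs
      omega
    obtain ⟨ms, hms⟩ := half s hs'
    have hc : (n:ℚ) + (s:ℚ) + 1/2 + μ (s+1) = (n:ℚ) + (μ (s+1) + (s:ℚ) + 1/2) := by ring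
    have hsign : (-1:ℚ)^(n-s) = (-1:ℚ)^(s+n) := by
      have h2 : s+n = (n-s) + 2*s := by omega
      rw [h2, pow_add, pow_mul]
      norm_num
    rw [hc, cchoose_eq n ms _ hms, dimB_eq, hsign, hQeval]
    have hGfun : (fun i => (fun i => if i ≤ s then μ i else μ (i + 1) + 1) (i+1) + (i:ℚ) + 1/2)
        = (fun i => (if i+1 ≤ s then μ (i+1) else μ (i+1+1)+1) + (i:ℚ) + 1/2) := by
      funext i
      simp only []
    rw [hGfun]
    ring
  rw [Finset.sum_congr rfl hrw, ← Finset.sum_mul]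
  -- convert to a Fin-indexed sum and apply the master identity
  set Xf : Fin (n+1) → ℚ := fun j => μ ((j:ℕ)+1) + ((j:ℕ) : ℚ) + 1/2 with hXf
  have hfin : ∑ s ∈ range (n+1),
      (-1:ℚ)^(s+n) * ((μ (s+1) + (s:ℚ) + 1/2) * Q.eval ((μ (s+1) + (s:ℚ) + 1/2)^2)) *
        Godd n (fun i => (if i+1 ≤ s then μ (i+1) else μ (i+1+1)+1) + (i:ℚ) + 1/2)
      = Godd (n+1) (fun i => μ (i+1) + (i : ℚ) + 1/2) := by
    rw [← Fin.sum_univ_eq_sum_range (fun s =>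
      (-1:ℚ)^(s+n) * ((μ (s+1) + (s:ℚ) + 1/2) * Q.eval ((μ (s+1) + (s:ℚ) + 1/2)^2)) *
        Godd n (fun i => (if i+1 ≤ s then μ (i+1) else μ (i+1+1)+1) + (i:ℚ) + 1/2))]
    rw [← Fodd_eq_Godd (n+1) (fun i => μ (i+1) + (i : ℚ) + 1/2)]
    have hXff : (fun i : Fin (n+1) => (fun i : ℕ => μ (i+1) + (i : ℚ) + 1/2) (i : ℕ)) = Xf := rfl
    rw [hXff]
    rw [← master n Xf Q hQmonic hQdeg]
    refine Finset.sum_congr rfl fun s _ => ?_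
    have hterm : Godd n (fun i => (if i+1 ≤ (s:ℕ) then μ (i+1) else μ (i+1+1)+1) + (i:ℚ) + 1/2)
        = FoddQ n (fun i => Xf (s.succAbove i)) := by
      rw [← Fodd_eq_Godd n
        (fun i => (if i+1 ≤ (s:ℕ) then μ (i+1) else μ (i+1+1)+1) + (i:ℚ) + 1/2)]
      congr 1
      funext i
      have hv := val_succAbove' s i
      rw [hXf]
      simp only [hv]
      by_cases h : (i:ℕ) < (s:ℕ)
      · rw [if_pos h, if_pos (by omega : (i:ℕ)+1 ≤ (s:ℕ))]
      · rw [if_neg h, if_neg (by omega : ¬ ((i:ℕ)+1 ≤ (s:ℕ)))]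
        push_cast
        ring
    rw [hterm, hXf]
  rw [hfin, dimB_eq]
  -- final bookkeeping with the constants
  have hR := RQ_succ n
  have hRn : Godd n (fun i => (i : ℚ) + 1/2) ≠ 0 := (RQ_pos n).ne'
  have hRn1 : Godd (n+1) (fun i => (i : ℚ) + 1/2) ≠ 0 := (RQ_pos (n+1)).ne'
  have hf : (Nat.factorial (2*n+1) : ℚ) ≠ 0 := by
    exact_mod_cast Nat.factorial_ne_zero (2*n+1)
  have h' : (Nat.factorial (2*n+1) : ℚ) * Godd n (fun i => (i : ℚ) + 1/2)
      = Godd (n+1) (fun i => (i : ℚ) + 1/2) * 2 := by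
    linarith
  rw [h']
  ring
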